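/- The 2n Jucys–Murphy operators X_1^L, …, X_n^L, X_1^R, …, X_n^R on U_t^{⊗n} pairwise commute: for all j, j' ∈ {1, …, n}, X_j^L X_{j'}^L = X_{j'}^L X_j^L, X_j^R X_{j'}^R = X_{j'}^R X_j^R, and X_j^L X_{j'}^R = X_{j'}^R X_j^L. (Operator realization of the fact that the elements X_j^L, X_j^R generate a commutative (free polynomial) subalgebra of the affine partition algebra AP_n.) -/

import Mathlib

open scoped Classical

noncomputable section

/-- The Jucys–Murphy operator `X_j^L` on `U_t^{⊗n}`, where the tensor factors are indexed by
positions `p : Fin n` (position `p` is the string numbered `j = p + 1`). -/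
def jmL (k : Type*) [Field k] (t n : ℕ) (p : Fin n) :
    ((Fin n → Fin t) → k) →ₗ[k] ((Fin n → Fin t) → k) :=
  ∑ a : Fin t, Matrix.mulVecLin (Matrix.of fun (J I : Fin n → Fin t) =>
    if (fun q => if q ≤ p then Equiv.swap a (I p) (I q) else I q) = J then (1 : k) else 0)

/-- The Jucys–Murphy operator `X_j^R` on `U_t^{⊗n}`. -/
def jmR (k : Type*) [Field k] (t n : ℕ) (p : Fin n) :
    ((Fin n → Fin t) → k) →ₗ[k] ((Fin n → Fin t) → k) :=
  ∑ a : Fin t, Matrix.mulVecLin (Matrix.of fun (J I : Fin n → Fin t) =>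
    if (fun q => if q < p then Equiv.swap a (I p) (I q) else I q) = J then (1 : k) else 0)

namespace JM

variable {k : Type*} [Field k] {t n : ℕ}

/-- Indicator matrix of a function on index tuples. -/
def ind (k : Type*) [Field k] {t n : ℕ} (F : (Fin n → Fin t) → (Fin n → Fin t)) :
    Matrix (Fin n → Fin t) (Fin n → Fin t) k :=
  Matrix.of fun J I => if F I = J then 1 else 0

lemma ind_mul (F G : (Fin n → Fin t) → (Fin n → Fin t)) :
    ind k F * ind k G = ind k (F ∘ G) := by
  ext J I
  simp only [Matrix.mul_apply, ind, Matrix.of_apply]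
  rw [Finset.sum_eq_single (G I)]
  · simp
  · intro b _ hb; simp [Ne.symm hb]
  · simp

lemma mulVecLin_sum {α : Type*} (s : Finset α)
    (M : α → Matrix (Fin n → Fin t) (Fin n → Fin t) k) :
    (∑ a ∈ s, M a).mulVecLin = ∑ a ∈ s, (M a).mulVecLin := by
  induction s using Finset.induction with
  | empty => simp [Matrix.mulVecLin_zero]
  | insert _ _ h ih => simp [Finset.sum_insert h, Matrix.mulVecLin_add, ih]

/-- Core abstract commutation lemma: if there is, for each tuple `I`, a bijection on pairs
of summation indices matching up composites, then the two operator sums commute. -/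
lemma comp_eq_comp (F G F' G' : Fin t → (Fin n → Fin t) → (Fin n → Fin t))
    (e : (Fin n → Fin t) → (Fin t × Fin t) ≃ (Fin t × Fin t))
    (h : ∀ (ab : Fin t × Fin t) (I : Fin n → Fin t),
      F ab.1 (G ab.2 I) = G' (e I ab).2 (F' (e I ab).1 I)) :
    (∑ a : Fin t, (ind k (F a)).mulVecLin).comp (∑ b : Fin t, (ind k (G b)).mulVecLin)
      = (∑ b : Fin t, (ind k (G' b)).mulVecLin).comp
          (∑ a : Fin t, (ind k (F' a)).mulVecLin) := by
  rw [← mulVecLin_sum, ← mulVecLin_sum, ← mulVecLin_sum, ← mulVecLin_sum,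
    ← Matrix.mulVecLin_mul, ← Matrix.mulVecLin_mul]
  congr 1
  rw [Finset.sum_mul_sum, Finset.sum_mul_sum]
  simp only [ind_mul]
  ext J I
  simp only [Matrix.sum_apply, ind, Matrix.of_apply, Function.comp_apply]
  rw [← Finset.sum_product', ← Finset.sum_product', Finset.univ_product_univ]
  refine Fintype.sum_equiv ((e I).trans (Equiv.prodComm _ _)) _ _ ?_
  intro ab
  simp only [Equiv.trans_apply, Equiv.prodComm_apply, Prod.fst_swap, Prod.snd_swap]
  simp only [h ab I]
  congr

/-- `f^L_{a,p}`. -/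
def fL (a : Fin t) (p : Fin n) (I : Fin n → Fin t) : Fin n → Fin t :=
  fun q => if q ≤ p then Equiv.swap a (I p) (I q) else I q

/-- `f^R_{a,p}`. -/
def fR (a : Fin t) (p : Fin n) (I : Fin n → Fin t) : Fin n → Fin t :=
  fun q => if q < p then Equiv.swap a (I p) (I q) else I q

lemma jmL_eq (p : Fin n) : jmL k t n p = ∑ a : Fin t, (ind k (fL a p)).mulVecLin := rfl

lemma jmR_eq (p : Fin n) : jmR k t n p = ∑ a : Fin t, (ind k (fR a p)).mulVecLin := rfl

lemma fL_apply_p (a : Fin t) (p : Fin n) (I : Fin n → Fin t) : fL a p I p = a := by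
  simp [fL]

lemma swapLL (a b : Fin t) {p q : Fin n} (hq : q < p) (I : Fin n → Fin t) :
    fL a p (fL b q I) = fL (Equiv.swap a (I p) b) q (fL a p I) := by
  have hpq : ¬ p ≤ q := not_le.mpr hq
  funext r
  simp only [fL, hpq, if_neg hpq, if_pos hq.le]
  by_cases hrq : r ≤ q
  · have hrp : r ≤ p := hrq.trans hq.le
    simp [if_pos hrq, if_pos hrp, hpq, Equiv.swap_apply_apply, Equiv.Perm.mul_apply]
  · simp only [if_neg hrq]
    by_cases hrp : r ≤ p <;> simp [hrp]

lemma swapRR (a b : Fin t) {p q : Fin n} (hq : q < p) (I : Fin n → Fin t) :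
    fR a p (fR b q I) = fR (Equiv.swap a (I p) b) q (fR a p I) := by
  have hpq : ¬ p < q := not_lt.mpr hq.le
  funext r
  simp only [fR, hpq, if_neg hpq, if_pos hq]
  by_cases hrq : r < q
  · have hrp : r < p := hrq.trans hq
    simp [if_pos hrq, if_pos hrp, hpq, Equiv.swap_apply_apply, Equiv.Perm.mul_apply]
  · simp only [if_neg hrq]
    by_cases hrp : r < p <;> simp [hrp]

lemma swapLR (a b : Fin t) {p q : Fin n} (hq : q ≤ p) (I : Fin n → Fin t) :
    fL a p (fR b q I) = fR (Equiv.swap a (I p) b) q (fL a p I) := by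
  have hpq : ¬ p < q := not_lt.mpr hq
  funext r
  simp only [fL, fR, hpq, if_neg hpq, if_pos hq]
  by_cases hrq : r < q
  · have hrp : r ≤ p := (hrq.le.trans hq)
    simp [if_pos hrq, if_pos hrp, hpq, Equiv.swap_apply_apply, Equiv.Perm.mul_apply]
  · simp only [if_neg hrq]
    by_cases hrp : r ≤ p <;> simp [hrp]

lemma swapRL (a b : Fin t) {p q : Fin n} (hp : p < q) (I : Fin n → Fin t) :
    fL a p (fR b q I) = fR b q (fL (Equiv.swap b (I q) a) p I) := by
  have hqp : ¬ q ≤ p := not_le.mpr hp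
  funext r
  simp only [fL, fR, hqp, if_neg hqp, if_pos hp]
  by_cases hrp : r ≤ p
  · have hrq : r < q := lt_of_le_of_lt hrp hp
    simp only [if_pos hrp, if_pos hrq]
    rw [show a = Equiv.swap b (I q) (Equiv.swap b (I q) a) by simp]
    rw [Equiv.swap_apply_apply]
    simp
  · simp only [if_neg hrp]
    by_cases hrq : r < q <;> simp [hrq]

/-- The bijection `(a, b) ↦ (a, (a c) b)` on pairs. -/
def pairEquiv1 (c : Fin t) : (Fin t × Fin t) ≃ (Fin t × Fin t) where
  toFun ab := (ab.1, Equiv.swap ab.1 c ab.2)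
  invFun ab := (ab.1, Equiv.swap ab.1 c ab.2)
  left_inv := by intro ab; simp
  right_inv := by intro ab; simp

/-- The bijection `(a, b) ↦ ((b c) a, b)` on pairs. -/
def pairEquiv2 (c : Fin t) : (Fin t × Fin t) ≃ (Fin t × Fin t) where
  toFun ab := (Equiv.swap ab.2 c ab.1, ab.2)
  invFun ab := (Equiv.swap ab.2 c ab.1, ab.2)
  left_inv := by intro ab; simp
  right_inv := by intro ab; simp

end JM

open JM in
/-- The `2n` Jucys–Murphy operators `X_1^L, …, X_n^L, X_1^R, …, X_n^R` on `U_t^{⊗n}`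
pairwise commute. -/
theorem stmt6 (k : Type*) [Field k] [CharZero k] (t n : ℕ) (p q : Fin n) :
    (jmL k t n p).comp (jmL k t n q) = (jmL k t n q).comp (jmL k t n p) ∧
    (jmR k t n p).comp (jmR k t n q) = (jmR k t n q).comp (jmR k t n p) ∧
    (jmL k t n p).comp (jmR k t n q) = (jmR k t n q).comp (jmL k t n p) := by
  have keyLL : ∀ p q : Fin n, q < p →
      (jmL k t n p).comp (jmL k t n q) = (jmL k t n q).comp (jmL k t n p) := by
    intro p q hq
    rw [jmL_eq (p := p), jmL_eq (p := q)]
    exact comp_eq_comp (fun a => fL a p) (fun b => fL b q)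
      (fun a => fL a p) (fun b => fL b q)
      (fun I => pairEquiv1 (I p))
      (fun ab I => swapLL ab.1 ab.2 hq I)
  have keyRR : ∀ p q : Fin n, q < p →
      (jmR k t n p).comp (jmR k t n q) = (jmR k t n q).comp (jmR k t n p) := by
    intro p q hq
    rw [jmR_eq (p := p), jmR_eq (p := q)]
    exact comp_eq_comp (fun a => fR a p) (fun b => fR b q)
      (fun a => fR a p) (fun b => fR b q)
      (fun I => pairEquiv1 (I p))
      (fun ab I => swapRR ab.1 ab.2 hq I)
  have keyLR : (jmL k t n p).comp (jmR k t n q) = (jmR k t n q).comp (jmL k t n p) := by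
    rw [jmL_eq, jmR_eq]
    rcases le_or_gt q p with hqp | hpq
    · exact comp_eq_comp (fun a => fL a p) (fun b => fR b q)
        (fun a => fL a p) (fun b => fR b q)
        (fun I => pairEquiv1 (I p))
        (fun ab I => swapLR ab.1 ab.2 hqp I)
    · exact comp_eq_comp (fun a => fL a p) (fun b => fR b q)
        (fun a => fL a p) (fun b => fR b q)
        (fun I => pairEquiv2 (I q))
        (fun ab I => swapRL ab.1 ab.2 hpq I)
  refine ⟨?_, ?_, keyLR⟩
  · rcases lt_trichotomy p q with h | h | h
    · exact (keyLL q p h).symm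
    · rw [h]
    · exact keyLL p q h
  · rcases lt_trichotomy p q with h | h | h
    · exact (keyRR q p h).symm
    · rw [h]
    · exact keyRR p q h
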